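/- With the above notation, r·(l + m + n − 1 − √(l²+1) + √(m²+1) − √(n²+1))/(2l) = r_A·sin²(σ − β). -/

import Mathlib

open Real

set_option maxHeartbeats 2000000 in
theorem malfatti_radius_i4_A
    (a b c : ℝ) (ha : 0 < a) (hb : 0 < b) (hc : 0 < c)
    (habc : a < b + c) (hbca : b < c + a) (hcab : c < a + b)
    (s r rA rB rC α β γ σ l m n : ℝ)
    (hs : s = (a + b + c) / 2)
    (hr : r = Real.sqrt ((s - a) * (s - b) * (s - c) / s))
    (hrA : rA = Real.sqrt (s * (s - b) * (s - c) / (s - a)))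
    (hrB : rB = Real.sqrt (s * (s - c) * (s - a) / (s - b)))
    (hrC : rC = Real.sqrt (s * (s - a) * (s - b) / (s - c)))
    (hα : α ∈ Set.Ioo 0 (π / 2)) (hβ : β ∈ Set.Ioo 0 (π / 2)) (hγ : γ ∈ Set.Ioo 0 (π / 2))
    (hsinα : Real.sin α ^ 2 = a / s)
    (hsinβ : Real.sin β ^ 2 = b / s)
    (hsinγ : Real.sin γ ^ 2 = c / s)
    (hσ : σ = (α + β + γ) / 2)
    (hl : l = (s - a) / r) (hm : m = (s - b) / r) (hn : n = (s - c) / r) :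
    r * (l + m + n - 1 - Real.sqrt (l ^ 2 + 1) + Real.sqrt (m ^ 2 + 1) - Real.sqrt (n ^ 2 + 1)) / (2 * l) = rA * Real.sin (σ - β) ^ 2 := by
  have hx : 0 < s - a := by rw [hs]; linarith
  have hy : 0 < s - b := by rw [hs]; linarith
  have hz : 0 < s - c := by rw [hs]; linarith
  have hsp : 0 < s := by rw [hs]; linarith
  set u := Real.sqrt (s - a) with hudef
  set v := Real.sqrt (s - b) with hvdef
  set w := Real.sqrt (s - c) with hwdef
  set p := Real.sqrt a with hpdef
  set q := Real.sqrt b with hqdef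
  set t := Real.sqrt c with htdef
  set S := Real.sqrt s with hSdef
  have hu2 : u ^ 2 = s - a := Real.sq_sqrt hx.le
  have hv2 : v ^ 2 = s - b := Real.sq_sqrt hy.le
  have hw2 : w ^ 2 = s - c := Real.sq_sqrt hz.le
  have hp2 : p ^ 2 = a := Real.sq_sqrt ha.le
  have hq2 : q ^ 2 = b := Real.sq_sqrt hb.le
  have ht2 : t ^ 2 = c := Real.sq_sqrt hc.le
  have hS2 : S ^ 2 = s := Real.sq_sqrt hsp.le
  have hup : 0 < u := Real.sqrt_pos.mpr hx
  have hvp : 0 < v := Real.sqrt_pos.mpr hy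
  have hwp : 0 < w := Real.sqrt_pos.mpr hz
  have hpp : 0 < p := Real.sqrt_pos.mpr ha
  have hqp : 0 < q := Real.sqrt_pos.mpr hb
  have htp : 0 < t := Real.sqrt_pos.mpr hc
  have hSp : 0 < S := Real.sqrt_pos.mpr hsp
  -- r = u*v*w/S
  have hrv : r = u * v * w / S := by
    rw [hr, show (s - a) * (s - b) * (s - c) / s = (u * v * w / S) ^ 2 by
      rw [div_pow, mul_pow, mul_pow, hu2, hv2, hw2, hS2]]
    exact Real.sqrt_sq (by positivity)
  have hrAv : rA = S * v * w / u := by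
    rw [hrA, show s * (s - b) * (s - c) / (s - a) = (S * v * w / u) ^ 2 by
      rw [div_pow, mul_pow, mul_pow, hS2, hv2, hw2, hu2]]
    exact Real.sqrt_sq (by positivity)
  have hrp : 0 < r := by rw [hrv]; positivity
  -- l, m, n values
  have hl' : l = u * S / (v * w) := by
    rw [hl, hrv, ← hu2]; field_simp
  have hm' : m = v * S / (w * u) := by
    rw [hm, hrv, ← hv2]; field_simp
  have hn' : n = w * S / (u * v) := by
    rw [hn, hrv, ← hw2]; field_simp
  -- sqrt (l^2+1) etc.
  have hsl : Real.sqrt (l ^ 2 + 1) = q * t / (v * w) := by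
    rw [show l ^ 2 + 1 = (q * t / (v * w)) ^ 2 by
      rw [hl', div_pow, div_pow, mul_pow, mul_pow, mul_pow, hu2, hS2, hq2, ht2, hv2, hw2]
      field_simp
      rw [hs]; ring]
    exact Real.sqrt_sq (by positivity)
  have hsm : Real.sqrt (m ^ 2 + 1) = t * p / (w * u) := by
    rw [show m ^ 2 + 1 = (t * p / (w * u)) ^ 2 by
      rw [hm', div_pow, div_pow, mul_pow, mul_pow, mul_pow, hv2, hS2, ht2, hp2, hw2, hu2]
      field_simp
      rw [hs]; ring]
    exact Real.sqrt_sq (by positivity)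
  have hsn : Real.sqrt (n ^ 2 + 1) = p * q / (u * v) := by
    rw [show n ^ 2 + 1 = (p * q / (u * v)) ^ 2 by
      rw [hn', div_pow, div_pow, mul_pow, mul_pow, mul_pow, hw2, hS2, hp2, hq2, hu2, hv2]
      field_simp
      rw [hs]; ring]
    exact Real.sqrt_sq (by positivity)
  -- sin and cos values
  have sincos : ∀ θ : ℝ, θ ∈ Set.Ioo 0 (π / 2) → ∀ d : ℝ, 0 ≤ d → d ≤ s → Real.sin θ ^ 2 = d / s →
      Real.sin θ = Real.sqrt d / S ∧ Real.cos θ = Real.sqrt (s - d) / S := by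
    intro θ hθ d hd0 hds hd
    have hsinpos : 0 < Real.sin θ :=
      Real.sin_pos_of_pos_of_lt_pi hθ.1 (lt_trans hθ.2 (by linarith [Real.pi_pos]))
    have hcospos : 0 < Real.cos θ :=
      Real.cos_pos_of_mem_Ioo ⟨by linarith [hθ.1, Real.pi_pos], hθ.2⟩
    constructor
    · have h0 : Real.sin θ = Real.sqrt (Real.sin θ ^ 2) := (Real.sqrt_sq hsinpos.le).symm
      rw [h0, hd, Real.sqrt_div hd0 s]
    · have h1 := Real.sin_sq_add_cos_sq θ
      have hc2 : Real.cos θ ^ 2 = (s - d) / s := by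
        have h2 : Real.cos θ ^ 2 = 1 - d / s := by rw [← hd]; linarith
        rw [h2]; field_simp
      have h0 : Real.cos θ = Real.sqrt (Real.cos θ ^ 2) := (Real.sqrt_sq hcospos.le).symm
      rw [h0, hc2, Real.sqrt_div (by linarith : (0:ℝ) ≤ s - d) s]
  obtain ⟨hsa, hca⟩ := sincos α hα a ha.le (by linarith) hsinα
  obtain ⟨hsb, hcb⟩ := sincos β hβ b hb.le (by linarith) hsinβ
  obtain ⟨hsc, hcc⟩ := sincos γ hγ c hc.le (by linarith) hsinγ
  -- the half-angle expansion
  have hhalf : Real.sin (σ - β) ^ 2 = 1/2 - Real.cos (α - β + γ) / 2 := by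
    have h2 : α - β + γ = 2 * (σ - β) := by rw [hσ]; ring
    rw [Real.sin_sq, Real.cos_sq, h2]; ring
  have hcosexp : Real.cos (α - β + γ) = (u * v * w - p * v * t + p * w * q + u * t * q) / S ^ 3 := by
    have : α - β + γ = (α + γ) - β := by ring
    rw [this, Real.cos_sub, Real.cos_add, Real.sin_add, hsa, hca, hsb, hcb, hsc, hcc]
    simp only [← hudef, ← hvdef, ← hwdef, ← hpdef, ← hqdef, ← htdef]
    field_simp
    ring
  rw [hhalf, hcosexp, hrAv, hrv, hsl, hsm, hsn, hl', hm', hn']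
  have hsum : u ^ 2 + v ^ 2 + w ^ 2 = S ^ 2 := by
    rw [hu2, hv2, hw2, hS2, hs]; ring
  field_simp
  linear_combination S * hsum
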